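/- The evaluation map τ ↦ (τ(g₀), τ(g₁), τ(g₂), τ(g₃)) is a bijection from the set of group homomorphisms G → U(1) onto U(1) × U(1) × {±1} × {±1}, where {±1} = {z ∈ U(1) : z² = 1}. -/

import Mathlib

/-- The underlying set of the group `G` is `ℤ⁴`. -/
def G : Type := ℤ × ℤ × ℤ × ℤ

namespace G

/-- Build an element of `G` from four integers. -/
def mk (a b c d : ℤ) : G := (a, b, c, d)

/-- The twisted multiplication
`(a,b,c,d)·(a',b',c',d') = (a+a', b+b', c+(−1)^a·c', d+(−1)^a·d')`. -/
def mul' (x y : G) : G :=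
  mk (x.1 + y.1) (x.2.1 + y.2.1)
    (x.2.2.1 + (x.1.negOnePow : ℤ) * y.2.2.1)
    (x.2.2.2 + (x.1.negOnePow : ℤ) * y.2.2.2)

/-- The inverse `(a,b,c,d)⁻¹ = (−a, −b, −(−1)^a·c, −(−1)^a·d)`. -/
def inv' (x : G) : G :=
  mk (-x.1) (-x.2.1) (-((x.1.negOnePow : ℤ) * x.2.2.1)) (-((x.1.negOnePow : ℤ) * x.2.2.2))

instance instGroup : Group G where
  mul := mul'
  one := mk 0 0 0 0
  inv := inv'
  mul_assoc x y z := by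
    show mul' (mul' x y) z = mul' x (mul' y z)
    obtain ⟨a, b, c, d⟩ := x
    obtain ⟨a', b', c', d'⟩ := y
    obtain ⟨a'', b'', c'', d''⟩ := z
    simp only [mul', mk, Int.negOnePow_add, Units.val_mul]
    exact Prod.ext (by ring) (Prod.ext (by ring) (Prod.ext (by ring) (by ring)))
  one_mul x := by
    show mul' (mk 0 0 0 0) x = x
    obtain ⟨a, b, c, d⟩ := x
    simp [mul', mk]
    rfl
  mul_one x := by
    show mul' x (mk 0 0 0 0) = x
    obtain ⟨a, b, c, d⟩ := x
    simp [mul', mk]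
    rfl
  inv_mul_cancel x := by
    show mul' (inv' x) x = mk 0 0 0 0
    obtain ⟨a, b, c, d⟩ := x
    simp only [mul', inv', mk, Int.negOnePow_neg]
    exact Prod.ext (by ring) (Prod.ext (by ring) (Prod.ext (by ring) (by ring)))

def g₀ : G := mk 1 0 0 0
def g₁ : G := mk 0 1 0 0
def g₂ : G := mk 0 0 1 0
def g₃ : G := mk 0 0 0 1

lemma mul_def (x y : G) : x * y = mul' x y := rfl

lemma g₀_zpow (a : ℤ) : g₀ ^ a = mk a 0 0 0 := by
  induction a using Int.induction_on with
  | zero => rfl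
  | succ n ih =>
    rw [zpow_add_one, ih, mul_def]
    simp [mul', mk, g₀]
    rfl
  | pred n ih =>
    rw [zpow_sub_one, ih]
    show mul' _ (inv' _) = _
    simp [mul', inv', mk, g₀]
    ring
    rfl

lemma g₁_zpow (b : ℤ) : g₁ ^ b = mk 0 b 0 0 := by
  induction b using Int.induction_on with
  | zero => rfl
  | succ n ih =>
    rw [zpow_add_one, ih, mul_def]
    simp [mul', mk, g₁]
    rfl
  | pred n ih =>
    rw [zpow_sub_one, ih]
    show mul' _ (inv' _) = _
    simp [mul', inv', mk, g₁]
    ring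
    rfl

lemma g₂_zpow (c : ℤ) : g₂ ^ c = mk 0 0 c 0 := by
  induction c using Int.induction_on with
  | zero => rfl
  | succ n ih =>
    rw [zpow_add_one, ih, mul_def]
    simp [mul', mk, g₂]
    rfl
  | pred n ih =>
    rw [zpow_sub_one, ih]
    show mul' _ (inv' _) = _
    simp [mul', inv', mk, g₂]
    ring
    rfl

lemma g₃_zpow (d : ℤ) : g₃ ^ d = mk 0 0 0 d := by
  induction d using Int.induction_on with
  | zero => rfl
  | succ n ih =>
    rw [zpow_add_one, ih, mul_def]
    simp [mul', mk, g₃]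
    rfl
  | pred n ih =>
    rw [zpow_sub_one, ih]
    show mul' _ (inv' _) = _
    simp [mul', inv', mk, g₃]
    ring
    rfl

lemma decomp (a b c d : ℤ) : (mk a b c d : G) = g₁ ^ b * g₂ ^ c * g₃ ^ d * g₀ ^ a := by
  rw [g₀_zpow, g₁_zpow, g₂_zpow, g₃_zpow]
  show _ = mul' (mul' (mul' _ _) _) _
  simp [mul', mk]
  rfl

end G

lemma zpow_eq_of_sq_one {w : Circle} (hw : w ^ 2 = 1) (n : ℤ) : w ^ (-n) = w ^ n := by
  have h : w⁻¹ = w := by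
    rw [inv_eq_iff_mul_eq_one, ← sq, hw]
  rw [zpow_neg, ← inv_zpow, h]

lemma zpow_negOnePow_mul {w : Circle} (hw : w ^ 2 = 1) (a n : ℤ) :
    w ^ ((a.negOnePow : ℤ) * n) = w ^ n := by
  rcases Int.even_or_odd a with h | h
  · rw [Int.negOnePow_even a h]; simp
  · rw [Int.negOnePow_odd a h]
    rw [show (((-1 : ℤˣ) : ℤ)) * n = -n by simp]
    exact zpow_eq_of_sq_one hw n

open G in
/-- The evaluation map `τ ↦ (τ(g₀), τ(g₁), τ(g₂), τ(g₃))` is a bijection from the set of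
group homomorphisms `G → U(1)` onto `U(1) × U(1) × {±1} × {±1}`. -/
theorem G_circle_hom_classification :
    Function.Injective (fun τ : G →* Circle => (τ g₀, τ g₁, τ g₂, τ g₃)) ∧
    Set.range (fun τ : G →* Circle => (τ g₀, τ g₁, τ g₂, τ g₃)) =
      {p : Circle × Circle × Circle × Circle | p.2.2.1 ^ 2 = 1 ∧ p.2.2.2 ^ 2 = 1} := by
  constructor
  · intro τ σ h
    simp only [Prod.mk.injEq] at h
    obtain ⟨h0, h1, h2, h3⟩ := h
    ext x
    obtain ⟨a, b, c, d⟩ := x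
    rw [show ((a, b, c, d) : G) = mk a b c d from rfl, decomp]
    simp only [map_mul, map_zpow, h0, h1, h2, h3]
  · ext p
    constructor
    · rintro ⟨τ, rfl⟩
      have key₂ : g₀ * g₂ * g₀⁻¹ = g₂⁻¹ := by
        show mul' (mul' g₀ g₂) (inv' g₀) = inv' g₂
        simp [mul', inv', mk, g₀, g₂]
        rfl
      have key₃ : g₀ * g₃ * g₀⁻¹ = g₃⁻¹ := by
        show mul' (mul' g₀ g₃) (inv' g₀) = inv' g₃
        simp [mul', inv', mk, g₀, g₃]
        rfl
      constructor
      · have := congrArg τ key₂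
        simp only [map_mul, map_inv] at this
        have h2 : τ g₂ = (τ g₂)⁻¹ := by
          rw [← this, mul_comm (τ g₀), mul_assoc, mul_inv_cancel, mul_one]
        show (τ g₂) ^ 2 = 1
        rw [sq]; exact mul_eq_one_iff_eq_inv.mpr h2
      · have := congrArg τ key₃
        simp only [map_mul, map_inv] at this
        have h3 : τ g₃ = (τ g₃)⁻¹ := by
          rw [← this, mul_comm (τ g₀), mul_assoc, mul_inv_cancel, mul_one]
        show (τ g₃) ^ 2 = 1
        rw [sq]; exact mul_eq_one_iff_eq_inv.mpr h3
    · rintro ⟨hw, ht⟩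
      obtain ⟨u, v, w, t⟩ := p
      simp only [Set.mem_setOf_eq] at hw ht
      refine ⟨MonoidHom.mk' (fun x : G => u ^ x.1 * v ^ x.2.1 * w ^ x.2.2.1 * t ^ x.2.2.2) ?_, ?_⟩
      · rintro ⟨a, b, c, d⟩ ⟨a', b', c', d'⟩
        show u ^ (a + a') * v ^ (b + b') * w ^ (c + (a.negOnePow : ℤ) * c') *
            t ^ (d + (a.negOnePow : ℤ) * d') = _
        rw [zpow_add, zpow_add, zpow_add, zpow_add,
          zpow_negOnePow_mul hw, zpow_negOnePow_mul ht]
        simp only [mul_assoc, mul_comm, mul_left_comm]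
      · show (_, _, _, _) = (u, v, w, t)
        simp only [MonoidHom.mk'_apply, g₀, g₁, g₂, g₃, mk, zpow_one, zpow_zero,
          one_mul, mul_one]
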